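/- For every integer p ≥ 1 and every real number x with x ≠ 1, the following identity holds in the ring of formal power series ℝ⟦t⟧: Σ_{n=0}^∞ A_n^p(x)·t^n/n! = (1 − (x−1)^{−1}·σ^p((x−1)·t))^{−1}, where σ^p((x−1)·t) denotes the substitution of the series (x−1)·t into σ^p, and the right-hand side is the multiplicative inverse of a power series with constant term 1. -/

import Mathlib

/-- Stirling numbers of the second kind. -/
def S2 : ℕ → ℕ → ℕ
  | 0, 0 => 1
  | 0, _ + 1 => 0
  | _ + 1, 0 => 0
  | n + 1, m + 1 => (m + 1) * S2 n (m + 1) + S2 n m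

/-- Entries `S^p_{n,m}` of the `p`-th power of the Stirling matrix (for `p ≥ 1`;
the value at `p = 0` is junk). -/
def Sp : ℕ → ℕ → ℕ → ℕ
  | 0, _, _ => 0
  | 1, n, m => S2 n m
  | p + 2, n, m => ∑ k ∈ Finset.range (n + 1), S2 n k * Sp (p + 1) k m

/-- Composition `f ∘ g` of formal power series (the intended meaning when `g` has zero
constant term, in which case `coeff n (g ^ k) = 0` for `k > n`). -/
noncomputable def PSComp (f g : PowerSeries ℝ) : PowerSeries ℝ :=
  PowerSeries.mk fun n =>
    ∑ k ∈ Finset.range (n + 1), (PowerSeries.coeff (R := ℝ) k f) * (PowerSeries.coeff (R := ℝ) n (g ^ k))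

/-- `σ^p`, the `p`-fold compositional iterate of `exp X - 1` (with `σ^0 = X`). -/
noncomputable def sigmaP : ℕ → PowerSeries ℝ
  | 0 => PowerSeries.X
  | p + 1 => PSComp (sigmaP p) (PowerSeries.exp ℝ - 1)
/-- Higher order Eulerian numbers:
`A^p_{n,m} = ∑_{k=0}^n k!·S^p_{n,k}·C(n-k,m)·(-1)^{n-k-m}` (the terms with `m > n-k`
vanish since then the binomial coefficient is zero). -/
def EulerNum (p n m : ℕ) : ℤ :=
  ∑ k ∈ Finset.range (n + 1),
    (k.factorial * Sp p n k : ℤ) * ((n - k).choose m) * (-1) ^ (n - k - m)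

/-- Higher order Eulerian polynomials: `A_n^p(x) = ∑_{m=0}^n A^p_{n,m} x^m`. -/
noncomputable def EulerPoly (p n : ℕ) (x : ℝ) : ℝ :=
  ∑ m ∈ Finset.range (n + 1), (EulerNum p n m : ℝ) * x ^ m

lemma coeff_pow_zero_of_lt {u : PowerSeries ℝ} (h : PowerSeries.constantCoeff (R := ℝ) u = 0)
    {k n : ℕ} (hn : n < k) : PowerSeries.coeff (R := ℝ) n (u ^ k) = 0 :=
  PowerSeries.X_pow_dvd_iff.mp (pow_dvd_pow_of_dvd (PowerSeries.X_dvd_iff.mpr h) k) n hn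

lemma constantCoeff_exp_sub_one : PowerSeries.constantCoeff (R := ℝ) (PowerSeries.exp ℝ - 1) = 0 := by
  simp [PowerSeries.constantCoeff_exp]

lemma coeff_exp_sub_one (n : ℕ) :
    PowerSeries.coeff (R := ℝ) n (PowerSeries.exp ℝ - 1) =
      if n = 0 then 0 else (1 : ℝ) / n.factorial := by
  rcases n with _ | n <;>
    simp [PowerSeries.coeff_exp, PowerSeries.coeff_one, Nat.factorial]

lemma derivative_exp' : PowerSeries.derivative ℝ (PowerSeries.exp ℝ) = PowerSeries.exp ℝ := by
  ext n
  rw [PowerSeries.coeff_derivative]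
  simp [PowerSeries.coeff_exp, Nat.factorial_succ]
  push_cast
  field_simp

lemma stirling_egf : ∀ (n k : ℕ),
    PowerSeries.coeff (R := ℝ) n ((PowerSeries.exp ℝ - 1) ^ k) =
      k.factorial * S2 n k / n.factorial := by
  intro n
  induction n with
  | zero =>
    intro k
    rw [PowerSeries.coeff_zero_eq_constantCoeff, map_pow, constantCoeff_exp_sub_one]
    cases k with
    | zero => simp [S2]
    | succ m => simp [S2, Nat.factorial]
  | succ n ih =>
    intro k
    have key := PowerSeries.coeff_derivative ((PowerSeries.exp ℝ - 1) ^ k) n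
    cases k with
    | zero =>
      simp only [pow_zero, PowerSeries.coeff_one, Nat.succ_ne_zero, if_false]
      show (0:ℝ) = (Nat.factorial 0 : ℝ) * (S2 (n+1) 0 : ℕ) / (n+1).factorial
      simp [S2]
    | succ m =>
      have hexp : PowerSeries.exp ℝ = (PowerSeries.exp ℝ - 1) + 1 := by ring
      have hd : PowerSeries.derivative ℝ ((PowerSeries.exp ℝ - 1) ^ (m + 1)) =
          (m + 1) • ((PowerSeries.exp ℝ - 1) ^ (m + 1) + (PowerSeries.exp ℝ - 1) ^ m) := by
        rw [Derivation.leibniz_pow]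
        have hde : PowerSeries.derivative ℝ (PowerSeries.exp ℝ - 1) = PowerSeries.exp ℝ := by
          rw [map_sub, derivative_exp', Derivation.map_one_eq_zero, sub_zero]
        rw [hde, Nat.add_sub_cancel, nsmul_eq_mul, nsmul_eq_mul, smul_eq_mul]
        push_cast
        linear_combination (((m:PowerSeries ℝ)+1) * (PowerSeries.exp ℝ - 1)^m) * hexp
      rw [hd, map_nsmul, map_add, ih, ih, nsmul_eq_mul] at key
      have hS : (S2 (n+1) (m+1) : ℝ) = (m+1) * S2 n (m+1) + S2 n m := by
        show ((((m + 1) * S2 n (m + 1) + S2 n m : ℕ)) : ℝ) = _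
        push_cast; ring
      have hn1 : ((n:ℝ)+1) ≠ 0 := by positivity
      have hnf : ((n.factorial : ℝ)) ≠ 0 := Nat.cast_ne_zero.mpr n.factorial_ne_zero
      have := key
      field_simp at this
      rw [Nat.factorial_succ m] at this
      push_cast at this
      rw [Nat.factorial_succ n, Nat.factorial_succ m]
      field_simp
      push_cast
      rw [hS]
      linear_combination -this

lemma coeff_PSComp (f g : PowerSeries ℝ) (n : ℕ) :
    PowerSeries.coeff (R := ℝ) n (PSComp f g) =
      ∑ k ∈ Finset.range (n + 1), (PowerSeries.coeff (R := ℝ) k f) * (PowerSeries.coeff (R := ℝ) n (g ^ k)) :=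
  PowerSeries.coeff_mk _ _

lemma coeff_PSComp_ext {g : PowerSeries ℝ} (hg : PowerSeries.constantCoeff (R := ℝ) g = 0)
    (f : PowerSeries ℝ) {m n : ℕ} (hm : m ≤ n) :
    PowerSeries.coeff (R := ℝ) m (PSComp f g) =
      ∑ k ∈ Finset.range (n + 1), (PowerSeries.coeff (R := ℝ) k f) * (PowerSeries.coeff (R := ℝ) m (g ^ k)) := by
  rw [coeff_PSComp]
  apply Finset.sum_subset (Finset.range_subset_range.mpr (by omega))
  intro k hk hknot
  simp only [Finset.mem_range] at hk hknot
  rw [coeff_pow_zero_of_lt hg (by omega), mul_zero]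

lemma constantCoeff_PSComp (f g : PowerSeries ℝ) :
    PowerSeries.constantCoeff (R := ℝ) (PSComp f g) = PowerSeries.constantCoeff (R := ℝ) f := by
  rw [← PowerSeries.coeff_zero_eq_constantCoeff_apply, coeff_PSComp]
  simp

lemma PSComp_one (g : PowerSeries ℝ) : PSComp 1 g = 1 := by
  ext n
  rw [coeff_PSComp]
  rw [Finset.sum_eq_single 0]
  · simp
  · intro k _ hk
    simp [PowerSeries.coeff_one, hk]
  · simp

lemma PSComp_mul {g : PowerSeries ℝ} (hg : PowerSeries.constantCoeff (R := ℝ) g = 0)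
    (f₁ f₂ : PowerSeries ℝ) :
    PSComp (f₁ * f₂) g = PSComp f₁ g * PSComp f₂ g := by
  ext n
  set F : ℕ × ℕ → ℝ := fun p =>
    (PowerSeries.coeff (R := ℝ) p.1 f₁) * (PowerSeries.coeff (R := ℝ) p.2 f₂) *
      (PowerSeries.coeff (R := ℝ) n (g ^ (p.1 + p.2))) with hF
  have hL : PowerSeries.coeff (R := ℝ) n (PSComp (f₁ * f₂) g) =
      ∑ m ∈ Finset.range (n + 1), ∑ p ∈ Finset.HasAntidiagonal.antidiagonal m, F p := by
    rw [coeff_PSComp]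
    refine Finset.sum_congr rfl fun m hm => ?_
    rw [PowerSeries.coeff_mul, Finset.sum_mul]
    refine Finset.sum_congr rfl fun p hp => ?_
    rw [hF]
    simp only
    rw [Finset.HasAntidiagonal.mem_antidiagonal.mp hp]
  have hR : PowerSeries.coeff (R := ℝ) n (PSComp f₁ g * PSComp f₂ g) =
      ∑ p ∈ Finset.range (n + 1) ×ˢ Finset.range (n + 1), F p := by
    rw [PowerSeries.coeff_mul]
    have : ∀ q ∈ Finset.HasAntidiagonal.antidiagonal n,
        (PowerSeries.coeff (R := ℝ) q.1 (PSComp f₁ g)) * (PowerSeries.coeff (R := ℝ) q.2 (PSComp f₂ g)) =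
        ∑ p ∈ Finset.range (n + 1) ×ˢ Finset.range (n + 1),
          ((PowerSeries.coeff (R := ℝ) p.1 f₁) * (PowerSeries.coeff (R := ℝ) q.1 (g ^ p.1))) *
          ((PowerSeries.coeff (R := ℝ) p.2 f₂) * (PowerSeries.coeff (R := ℝ) q.2 (g ^ p.2))) := by
      intro q hq
      have hq' := Finset.HasAntidiagonal.mem_antidiagonal.mp hq
      rw [coeff_PSComp_ext hg f₁ (by omega : q.1 ≤ n),
          coeff_PSComp_ext hg f₂ (by omega : q.2 ≤ n),
          Finset.sum_mul_sum, ← Finset.sum_product']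
    rw [Finset.sum_congr rfl this, Finset.sum_comm]
    refine Finset.sum_congr rfl fun p hp => ?_
    have : ∑ q ∈ Finset.HasAntidiagonal.antidiagonal n,
        ((PowerSeries.coeff (R := ℝ) p.1 f₁) * (PowerSeries.coeff (R := ℝ) q.1 (g ^ p.1))) *
        ((PowerSeries.coeff (R := ℝ) p.2 f₂) * (PowerSeries.coeff (R := ℝ) q.2 (g ^ p.2))) =
        (PowerSeries.coeff (R := ℝ) p.1 f₁) * (PowerSeries.coeff (R := ℝ) p.2 f₂) *
          ∑ q ∈ Finset.HasAntidiagonal.antidiagonal n,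
            (PowerSeries.coeff (R := ℝ) q.1 (g ^ p.1)) * (PowerSeries.coeff (R := ℝ) q.2 (g ^ p.2)) := by
      rw [Finset.mul_sum]
      refine Finset.sum_congr rfl fun q _ => by ring
    rw [this, ← PowerSeries.coeff_mul, ← pow_add]
  rw [hL, hR]
  rw [← Finset.sum_biUnion]
  · apply Finset.sum_subset
    · intro p hp
      simp only [Finset.mem_biUnion, Finset.mem_range, Finset.HasAntidiagonal.mem_antidiagonal] at hp
      obtain ⟨m, hm, rfl⟩ := hp
      simp only [Finset.mem_product, Finset.mem_range]
      omega
    · intro p hp hpn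
      simp only [Finset.mem_product, Finset.mem_range] at hp
      simp only [Finset.mem_biUnion, Finset.mem_range, Finset.HasAntidiagonal.mem_antidiagonal] at hpn
      have : n < p.1 + p.2 := by
        by_contra h
        exact hpn ⟨p.1 + p.2, by omega, rfl⟩
      rw [hF]
      simp only
      rw [coeff_pow_zero_of_lt hg this, mul_zero]
  · intro m1 _ m2 _ hne
    apply Finset.disjoint_left.mpr
    intro p hp1 hp2
    simp only [Finset.HasAntidiagonal.mem_antidiagonal] at hp1 hp2
    exact hne (hp1 ▸ hp2 ▸ rfl)

lemma PSComp_pow {g : PowerSeries ℝ} (hg : PowerSeries.constantCoeff (R := ℝ) g = 0)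
    (f : PowerSeries ℝ) (k : ℕ) :
    PSComp (f ^ k) g = (PSComp f g) ^ k := by
  induction k with
  | zero => simpa using PSComp_one g
  | succ m ih => rw [pow_succ, PSComp_mul hg, ih, pow_succ]

lemma constantCoeff_sigmaP (p : ℕ) : PowerSeries.constantCoeff (R := ℝ) (sigmaP p) = 0 := by
  induction p with
  | zero => simp [sigmaP]
  | succ q ih => rw [sigmaP, constantCoeff_PSComp, ih]

lemma sigmaP_one : sigmaP 1 = PowerSeries.exp ℝ - 1 := by
  show PSComp (sigmaP 0) _ = _
  rw [sigmaP]
  ext n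
  rw [coeff_PSComp, Finset.sum_eq_single 1]
  · simp
  · intro k _ hk
    simp [PowerSeries.coeff_X, hk]
  · intro h1
    simp only [Finset.mem_range, not_lt] at h1
    have hn : n = 0 := by omega
    subst hn
    simp [constantCoeff_exp_sub_one]

lemma sp_egf : ∀ p, 1 ≤ p → ∀ k n,
    PowerSeries.coeff (R := ℝ) n ((sigmaP p) ^ k) = k.factorial * Sp p n k / n.factorial := by
  intro p
  induction p with
  | zero => omega
  | succ q ih =>
    intro _ k n
    rcases Nat.eq_zero_or_pos q with hq | hq
    · subst hq
      rw [sigmaP_one]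
      exact stirling_egf n k
    · obtain ⟨r, rfl⟩ : ∃ r, q = r + 1 := ⟨q - 1, by omega⟩
      show PowerSeries.coeff (R := ℝ) n ((PSComp (sigmaP (r + 1)) (PowerSeries.exp ℝ - 1)) ^ k) = _
      rw [← PSComp_pow constantCoeff_exp_sub_one, coeff_PSComp]
      have step : ∀ j ∈ Finset.range (n + 1),
          PowerSeries.coeff (R := ℝ) j ((sigmaP (r + 1)) ^ k) *
            PowerSeries.coeff (R := ℝ) n ((PowerSeries.exp ℝ - 1) ^ j) =
          (k.factorial : ℝ) * (S2 n j * Sp (r + 1) j k) / n.factorial := by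
        intro j _
        rw [ih (by omega) k j, stirling_egf n j]
        have hjf : ((j.factorial : ℝ)) ≠ 0 := Nat.cast_ne_zero.mpr j.factorial_ne_zero
        have hnf : ((n.factorial : ℝ)) ≠ 0 := Nat.cast_ne_zero.mpr n.factorial_ne_zero
        field_simp
      rw [Finset.sum_congr rfl step]
      show _ = (k.factorial : ℝ) * (Sp (r + 2) n k) / n.factorial
      have : ((Sp (r + 2) n k : ℕ) : ℝ) =
          ∑ j ∈ Finset.range (n + 1), (S2 n j : ℝ) * (Sp (r + 1) j k : ℝ) := by
        show ((∑ j ∈ Finset.range (n + 1), S2 n j * Sp (r + 1) j k : ℕ) : ℝ) = _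
        push_cast
        rfl
      rw [this, Finset.mul_sum, Finset.sum_div]

lemma PSComp_CX (f : PowerSeries ℝ) (a : ℝ) :
    PSComp f (PowerSeries.C (R := ℝ) a * PowerSeries.X) = PowerSeries.rescale a f := by
  ext n
  rw [coeff_PSComp, PowerSeries.coeff_rescale, Finset.sum_eq_single n]
  · rw [mul_pow, ← map_pow, PowerSeries.coeff_C_mul, PowerSeries.coeff_X_pow]
    simp [mul_comm]
  · intro k _ hk
    rw [mul_pow, ← map_pow, PowerSeries.coeff_C_mul, PowerSeries.coeff_X_pow]
    simp [hk, Ne.symm hk]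
  · intro h
    simp at h

lemma geom_inv {u : PowerSeries ℝ} (hu : PowerSeries.constantCoeff (R := ℝ) u = 0) :
    (1 - u) * (PowerSeries.mk fun n => ∑ k ∈ Finset.range (n + 1),
      PowerSeries.coeff (R := ℝ) n (u ^ k)) = 1 := by
  set G := PowerSeries.mk fun n => ∑ k ∈ Finset.range (n + 1),
      PowerSeries.coeff (R := ℝ) n (u ^ k) with hG
  ext n
  rw [sub_mul, one_mul, map_sub]
  have huG : PowerSeries.coeff (R := ℝ) n (u * G) =
      ∑ k ∈ Finset.range (n + 1), PowerSeries.coeff (R := ℝ) n (u ^ (k + 1)) := by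
    rw [PowerSeries.coeff_mul]
    have expand : ∀ p ∈ Finset.HasAntidiagonal.antidiagonal n,
        PowerSeries.coeff (R := ℝ) p.1 u * PowerSeries.coeff (R := ℝ) p.2 G =
        ∑ k ∈ Finset.range (n + 1),
          PowerSeries.coeff (R := ℝ) p.1 u * PowerSeries.coeff (R := ℝ) p.2 (u ^ k) := by
      intro p hp
      have hp' := Finset.HasAntidiagonal.mem_antidiagonal.mp hp
      rw [hG, PowerSeries.coeff_mk, Finset.mul_sum]
      rw [Finset.sum_subset (Finset.range_subset_range.mpr (by omega : p.2 + 1 ≤ n + 1))]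
      intro k hk hknot
      simp only [Finset.mem_range] at hk hknot
      rw [coeff_pow_zero_of_lt hu (by omega : p.2 < k), mul_zero]
    rw [Finset.sum_congr rfl expand, Finset.sum_comm]
    refine Finset.sum_congr rfl fun k _ => ?_
    rw [pow_succ']
    rw [PowerSeries.coeff_mul]
  rw [huG, hG, PowerSeries.coeff_mk, Finset.sum_range_succ', Finset.sum_range_succ]
  rw [coeff_pow_zero_of_lt hu (by omega : n < n + 1)]
  simp [PowerSeries.coeff_one]

lemma binom_sum (x : ℝ) (N n : ℕ) (h : N ≤ n) :
    ∑ m ∈ Finset.range (n + 1), (N.choose m : ℝ) * (-1 : ℝ) ^ (N - m) * x ^ m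
      = (x - 1) ^ N := by
  rw [← Finset.sum_subset (Finset.range_subset_range.mpr (by omega : N + 1 ≤ n + 1))]
  · rw [show x - 1 = x + (-1) by ring, add_pow]
    refine Finset.sum_congr rfl fun m _ => by ring
  · intro m hm hmn
    simp only [Finset.mem_range, not_lt] at hm hmn
    rw [Nat.choose_eq_zero_of_lt (by omega)]
    simp

/-- The EGF of the higher order Eulerian polynomials:
`∑ A_n^p(x) t^n/n! = (1 - (x-1)⁻¹ σ^p((x-1)t))⁻¹` for `x ≠ 1`. -/
theorem egf_eulerian (p : ℕ) (hp : 1 ≤ p) (x : ℝ) (hx : x ≠ 1) :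
    (PowerSeries.mk fun n => EulerPoly p n x / n.factorial) =
      (1 - PowerSeries.C (R := ℝ) (1 / (x - 1)) *
          PSComp (sigmaP p) (PowerSeries.C (R := ℝ) (x - 1) * PowerSeries.X))⁻¹ := by
  have hx1 : x - 1 ≠ 0 := sub_ne_zero.mpr hx
  set u := PowerSeries.C (R := ℝ) (1 / (x - 1)) *
      PSComp (sigmaP p) (PowerSeries.C (R := ℝ) (x - 1) * PowerSeries.X) with hu
  have hu' : u = PowerSeries.C (R := ℝ) (1 / (x - 1)) * PowerSeries.rescale (x - 1) (sigmaP p) := by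
    rw [hu, PSComp_CX]
  have hu0 : PowerSeries.constantCoeff (R := ℝ) u = 0 := by
    rw [hu', map_mul, PowerSeries.constantCoeff_C,
      ← PowerSeries.coeff_zero_eq_constantCoeff_apply, PowerSeries.coeff_rescale,
      PowerSeries.coeff_zero_eq_constantCoeff_apply, constantCoeff_sigmaP]
    ring
  have hcu : PowerSeries.constantCoeff (R := ℝ) (1 - u) ≠ 0 := by
    rw [map_sub, hu0, map_one, sub_zero]
    exact one_ne_zero
  rw [PowerSeries.eq_inv_iff_mul_eq_one hcu]
  have hcoeff : ∀ k, u ^ k = PowerSeries.C (R := ℝ) ((1 / (x - 1)) ^ k) *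
      PowerSeries.rescale (x - 1) ((sigmaP p) ^ k) := by
    intro k
    rw [hu', mul_pow, ← map_pow, ← map_pow]
  have key : (PowerSeries.mk fun n => EulerPoly p n x / n.factorial) =
      PowerSeries.mk fun n => ∑ k ∈ Finset.range (n + 1), PowerSeries.coeff (R := ℝ) n (u ^ k) := by
    ext n
    rw [PowerSeries.coeff_mk, PowerSeries.coeff_mk]
    have hterm : ∀ k ∈ Finset.range (n + 1),
        PowerSeries.coeff (R := ℝ) n (u ^ k) =
          (k.factorial : ℝ) * (Sp p n k) * (x - 1) ^ (n - k) / n.factorial := by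
      intro k hk
      simp only [Finset.mem_range] at hk
      rw [hcoeff k, PowerSeries.coeff_C_mul, PowerSeries.coeff_rescale, sp_egf p hp k n]
      have hpow : (x - 1) ^ (n - k) = (x - 1) ^ n / (x - 1) ^ k :=
        pow_sub₀ _ hx1 (by omega)
      rw [hpow, one_div, inv_pow]
      field_simp
    rw [Finset.sum_congr rfl hterm]
    have hEP : EulerPoly p n x =
        ∑ k ∈ Finset.range (n + 1),
          (k.factorial : ℝ) * (Sp p n k) * (x - 1) ^ (n - k) := by
      rw [EulerPoly]
      have : ∀ m ∈ Finset.range (n + 1), (EulerNum p n m : ℝ) * x ^ m =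
          ∑ k ∈ Finset.range (n + 1),
            (k.factorial : ℝ) * (Sp p n k) *
              ((n - k).choose m : ℝ) * (-1 : ℝ) ^ (n - k - m) * x ^ m := by
        intro m _
        rw [EulerNum]
        push_cast
        rw [Finset.sum_mul]
      rw [Finset.sum_congr rfl this, Finset.sum_comm]
      refine Finset.sum_congr rfl fun k hk => ?_
      simp only [Finset.mem_range] at hk
      rw [← binom_sum x (n - k) n (by omega), Finset.mul_sum]
      refine Finset.sum_congr rfl fun m _ => by ring
    rw [hEP, Finset.sum_div]
  rw [key, mul_comm]
  exact geom_inv hu0
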